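/- The slave offloading problem P1 with total offloaded bits ℓ is feasible if and only if ℓ ≤ U_K, where U_K is the total number of bits the helper's CPU can compute by the completion time. -/
import Mathlib


/-- Buffer state recursion: `B_0 = 0`,
`B_k = B_{k−1} + ℓ_k − min{B_{k−1} + ℓ_k, c_k}`, where `c_k = a_k τ_k f_h / C`
is the per-epoch CPU capacity (in bits) and `ℓ_k` the per-epoch offloaded bits. -/
def Bfun (c x : ℕ → ℝ) : ℕ → ℝ
  | 0 => 0
  | k + 1 => Bfun c x k + x (k + 1) - min (Bfun c x k + x (k + 1)) (c (k + 1))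

/-- Bits computed by the helper in epoch `k`: `d_k = min{B_{k−1} + ℓ_k, c_k}`. -/
def dfun (c x : ℕ → ℝ) (k : ℕ) : ℝ := min (Bfun c x (k - 1) + x k) (c k)

lemma Bfun_eq_sum (c x : ℕ → ℝ) : ∀ K : ℕ,
    Bfun c x K = (∑ k ∈ Finset.Icc 1 K, x k) - ∑ k ∈ Finset.Icc 1 K, dfun c x k := by
  intro K
  induction K with
  | zero => simp [Bfun]
  | succ n ih =>
    rw [Finset.sum_Icc_succ_top (Nat.succ_le_succ (Nat.zero_le n)),
        Finset.sum_Icc_succ_top (Nat.succ_le_succ (Nat.zero_le n))]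
    have hd : dfun c x (n + 1) = min (Bfun c x n + x (n + 1)) (c (n + 1)) := by
      simp [dfun]
    rw [hd]
    simp only [Bfun]
    rw [ih]
    ring

lemma Bfun_special (c : ℕ → ℝ) (ℓ : ℝ) (hc : ∀ k, 0 ≤ c k) :
    ∀ k : ℕ, 1 ≤ k →
      Bfun c (fun j => if j = 1 then ℓ else 0) k
        = max (ℓ - ∑ j ∈ Finset.Icc 1 k, c j) 0 := by
  intro k hk
  induction k, hk using Nat.le_induction with
  | base =>
    simp only [Bfun]
    norm_num
    rcases le_total ℓ (c 1) with h | h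
    · rw [min_eq_left h, max_eq_right (by linarith)]; ring
    · rw [min_eq_right h, max_eq_left (by linarith)]
  | succ n hn ih =>
    simp only [Bfun]
    rw [if_neg (by omega)]
    rw [Finset.sum_Icc_succ_top (Nat.succ_le_succ (Nat.zero_le n))]
    rw [ih]
    have hcn := hc (n + 1)
    rcases le_or_gt ℓ (∑ j ∈ Finset.Icc 1 n, c j) with h | h
    · rw [max_eq_right (by linarith), max_eq_right (by linarith)]
      simp [min_eq_left hcn]
    · rw [max_eq_left (by linarith)]
      rcases le_total (ℓ - ∑ j ∈ Finset.Icc 1 n, c j) (c (n + 1)) with h2 | h2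
      · rw [add_zero, min_eq_left h2, max_eq_right (by linarith)]; ring
      · rw [add_zero, min_eq_right h2, max_eq_left (by linarith)]; ring

/-- Problem P1 (with large buffer `Q ≥ ℓ`) is feasible iff `ℓ ≤ U_K`, where
`U_K = Σ_{k=1}^K c_k` is the total computable bits of the helper's CPU. -/
theorem P1_feasible_iff (K : ℕ) (c : ℕ → ℝ) (Q ℓ : ℝ)
    (hc : ∀ k, 0 ≤ c k) (hℓ : 0 ≤ ℓ) (hQ : ℓ ≤ Q) :
    (∃ x : ℕ → ℝ, (∀ j, 0 ≤ x j) ∧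
        (∑ k ∈ Finset.Icc 1 K, dfun c x k) = ℓ ∧
        (∑ k ∈ Finset.Icc 1 K, x k) = ℓ ∧
        ∀ k ≤ K, Bfun c x k ≤ Q) ↔
      ℓ ≤ ∑ k ∈ Finset.Icc 1 K, c k := by
  constructor
  · rintro ⟨x, hx, hd, hsum, hB⟩
    calc ℓ = ∑ k ∈ Finset.Icc 1 K, dfun c x k := hd.symm
      _ ≤ ∑ k ∈ Finset.Icc 1 K, c k :=
        Finset.sum_le_sum (fun k _ => min_le_right _ _)
  · intro h
    rcases Nat.eq_zero_or_pos K with rfl | hK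
    · have hℓ0 : ℓ = 0 := le_antisymm (by simpa using h) hℓ
      refine ⟨fun _ => 0, fun j => le_rfl, ?_, ?_, ?_⟩
      · simp [hℓ0]
      · simp [hℓ0]
      · intro k hk
        interval_cases k
        simpa [Bfun] using hℓ.trans hQ
    · refine ⟨fun j => if j = 1 then ℓ else 0, ?_, ?_, ?_, ?_⟩
      · intro j; dsimp only; split <;> simp [hℓ]
      · have hBK := Bfun_special c ℓ hc K hK
        have hB0 : Bfun c (fun j => if j = 1 then ℓ else 0) K = 0 := by
          rw [hBK, max_eq_right (by linarith)]
        have := Bfun_eq_sum c (fun j => if j = 1 then ℓ else 0) K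
        rw [hB0] at this
        have hxsum : (∑ k ∈ Finset.Icc 1 K, if k = 1 then ℓ else 0) = ℓ := by
          rw [Finset.sum_ite_eq' (Finset.Icc 1 K) 1 (fun _ => ℓ),
            if_pos (Finset.mem_Icc.mpr ⟨le_rfl, hK⟩)]
        rw [hxsum] at this
        linarith
      · rw [Finset.sum_ite_eq' (Finset.Icc 1 K) 1 (fun _ => ℓ),
          if_pos (Finset.mem_Icc.mpr ⟨le_rfl, hK⟩)]
      · intro k hk
        rcases Nat.eq_zero_or_pos k with rfl | hk1
        · simpa [Bfun] using hℓ.trans hQ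
        · rw [Bfun_special c ℓ hc k hk1]
          have : 0 ≤ ∑ j ∈ Finset.Icc 1 k, c j :=
            Finset.sum_nonneg fun j _ => hc j
          rcases le_total (ℓ - ∑ j ∈ Finset.Icc 1 k, c j) 0 with h2 | h2
          · rw [max_eq_right h2]; linarith
          · rw [max_eq_left h2]; linarith
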